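/- For any matrix A ∈ C^{m×m}, any angle θ and any real γ, the matrix Z(θ,γ) with entries z_{i,j} = (a_{i,j} + conj(a_{j,i}) e^{iθ})/2 for i ≠ j and z_{i,i} = (a_{i,i} + conj(a_{i,i}) e^{iθ} + γ e^{i(θ+π)/2})/2 satisfies ‖A − Z(θ,γ)‖_F² = ‖A‖_F²/2 + (m/4)γ² − (1/2) Re(e^{−iθ} Σ_{i,j} a_{i,j} a_{j,i}) − γ Im(e^{−iθ/2} Σ_i a_{i,i}). -/

import Mathlib

open Matrix Real Complex

/-- The candidate closest generalized Hermitian matrix `Z(θ,γ)` to `A`: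
`z_{i,j} = (a_{i,j} + conj(a_{j,i}) e^{iθ})/2` off the diagonal and
`z_{i,i} = (a_{i,i} + conj(a_{i,i}) e^{iθ} + γ e^{i(θ+π)/2})/2`. -/
noncomputable def Zmat {m : ℕ} (A : Matrix (Fin m) (Fin m) ℂ) (θ γ : ℝ) :
    Matrix (Fin m) (Fin m) ℂ :=
  Matrix.of fun i j =>
    if i = j then
      (A i i + (starRingEnd ℂ) (A i i) * Complex.exp (θ * Complex.I) +
        (γ : ℂ) * Complex.exp (((θ + π) / 2 : ℝ) * Complex.I)) / 2
    else (A i j + (starRingEnd ℂ) (A j i) * Complex.exp (θ * Complex.I)) / 2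

lemma offdiag' (a b : ℂ) (θ : ℝ) :
    ‖(a - (a + (starRingEnd ℂ) b * Complex.exp ((θ:ℂ) * Complex.I)) / 2)‖ ^ 2 =
    (‖a‖^2 + ‖b‖^2)/4 - (1/2) * (Complex.exp (-(θ:ℂ) * Complex.I) * (a * b)).re := by
  rw [Complex.exp_mul_I, Complex.exp_mul_I]
  simp only [Complex.sq_norm, Complex.normSq_apply]
  simp [Complex.cos_neg, Complex.sin_neg, Complex.cos_ofReal_re,
    Complex.sin_ofReal_re, Complex.cos_ofReal_im, Complex.sin_ofReal_im, Complex.div_re,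
    Complex.div_im, Complex.normSq_apply, Complex.mul_re, Complex.mul_im]
  nlinarith [Real.sin_sq_add_cos_sq θ]

lemma diag' (a : ℂ) (θ γ : ℝ) :
    ‖(a - (a + (starRingEnd ℂ) a * Complex.exp ((θ:ℂ) * Complex.I) +
        (γ : ℂ) * Complex.exp (((θ + π) / 2 : ℝ) * Complex.I)) / 2)‖ ^ 2 =
    (‖a‖^2 + ‖a‖^2)/4 - (1/2) * (Complex.exp (-(θ:ℂ) * Complex.I) * (a * a)).re
      + γ^2/4 - γ * (Complex.exp ((-(θ / 2) : ℝ) * Complex.I) * a).im := by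
  have e1 : Real.cos ((θ + π)/2) = -Real.sin (θ/2) := by
    rw [show (θ + π)/2 = θ/2 + π/2 by ring, Real.cos_add_pi_div_two]
  have e2 : Real.sin ((θ + π)/2) = Real.cos (θ/2) := by
    rw [show (θ + π)/2 = θ/2 + π/2 by ring, Real.sin_add_pi_div_two]
  have e3 := Real.cos_two_mul (θ/2)
  have e4 := Real.sin_two_mul (θ/2)
  rw [show 2*(θ/2) = θ by ring] at e3 e4
  have h0 : (-(θ:ℂ)) * Complex.I = ((-θ : ℝ) : ℂ) * Complex.I := by push_cast; ring
  have expI : ∀ x : ℝ, Complex.exp ((x:ℂ) * Complex.I) =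
      Complex.ofReal (Real.cos x) + Complex.ofReal (Real.sin x) * Complex.I := fun x => by
    rw [Complex.exp_mul_I, Complex.ofReal_cos, Complex.ofReal_sin]
  rw [h0, expI, expI, expI, expI]
  simp only [Complex.sq_norm, Complex.normSq_apply, Complex.sub_re,
    Complex.sub_im, Complex.add_re, Complex.add_im, Complex.mul_re, Complex.mul_im,
    Complex.div_re, Complex.div_im, Complex.ofReal_re, Complex.ofReal_im, Complex.I_re,
    Complex.I_im, Complex.conj_re, Complex.conj_im]
  norm_num [e1, e2, e3, e4, Real.cos_neg, Real.sin_neg]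
  have hsc := Real.sin_sq_add_cos_sq (θ/2)
  linear_combination (((2*Real.sin (θ/2)*a.re - 2*Real.cos (θ/2)*a.im + γ)^2)/4 + a.re^2 + 2*a.re*Real.cos (θ/2)*a.im*Real.sin (θ/2) - a.re*Real.sin (θ/2)*γ - a.re^2*(1 - Real.cos (θ/2)^2 + Real.sin (θ/2)^2)) * hsc

/-- The squared Frobenius distance from `A` to `Z(θ,γ)`:
`‖A − Z(θ,γ)‖_F² = ‖A‖_F²/2 + (m/4)γ² − (1/2)Re(e^{−iθ} Σ a_{i,j}a_{j,i})
  − γ Im(e^{−iθ/2} Σ a_{i,i})`. -/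
theorem frob_dist_Zmat (m : ℕ) (A : Matrix (Fin m) (Fin m) ℂ) (θ γ : ℝ) :
    (∑ i, ∑ j, ‖(A - Zmat A θ γ) i j‖ ^ 2) =
      (∑ i, ∑ j, ‖A i j‖ ^ 2) / 2 + (m : ℝ) / 4 * γ ^ 2 -
        (1 / 2) * (Complex.exp (-θ * Complex.I) * ∑ i, ∑ j, A i j * A j i).re -
        γ * (Complex.exp ((-(θ / 2) : ℝ) * Complex.I) * ∑ i, A i i).im := by
  have key : ∀ i j : Fin m, ‖(A - Zmat A θ γ) i j‖ ^ 2 =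
      ((‖A i j‖^2 + ‖A j i‖^2)/4
        - (1/2) * (Complex.exp (-(θ:ℂ) * Complex.I) * (A i j * A j i)).re)
      + (if i = j then γ^2/4 - γ * (Complex.exp ((-(θ / 2) : ℝ) * Complex.I) * A i i).im
         else 0) := by
    intro i j
    by_cases h : i = j
    · subst h
      simp only [Matrix.sub_apply, Zmat, Matrix.of_apply, eq_self_iff_true, if_true]
      rw [diag' (A i i) θ γ]
      ring
    · simp only [Matrix.sub_apply, Zmat, Matrix.of_apply, if_neg h]
      rw [offdiag' (A i j) (A j i) θ]
      ring
  simp only [key, Finset.sum_add_distrib, Finset.sum_ite_eq, Finset.mem_univ, if_true]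
  have hre : (Complex.exp (-(θ:ℂ) * Complex.I) * ∑ i, ∑ j, A i j * A j i).re
      = ∑ i, ∑ j, (Complex.exp (-(θ:ℂ) * Complex.I) * (A i j * A j i)).re := by
    rw [Finset.mul_sum, Complex.re_sum]
    refine Finset.sum_congr rfl fun i _ => ?_
    rw [Finset.mul_sum, Complex.re_sum]
  have him : (Complex.exp ((-(θ / 2) : ℝ) * Complex.I) * ∑ i, A i i).im
      = ∑ i, (Complex.exp ((-(θ / 2) : ℝ) * Complex.I) * A i i).im := by
    rw [Finset.mul_sum, Complex.im_sum]
  have h4 : ∑ x : Fin m, ∑ y : Fin m, (‖A x y‖^2 + ‖A y x‖^2)/4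
      = ∑ x : Fin m, ∑ y : Fin m, ‖A x y‖^2 / 2 := by
    have e : ∀ x y : Fin m, (‖A x y‖^2 + ‖A y x‖^2)/4 = ‖A x y‖^2/4 + ‖A y x‖^2/4 :=
      fun x y => by ring
    simp only [e, Finset.sum_add_distrib]
    rw [show (∑ x : Fin m, ∑ y : Fin m, ‖A y x‖^2/4) = ∑ y : Fin m, ∑ x : Fin m, ‖A y x‖^2/4
      from Finset.sum_comm ..]
    rw [← Finset.sum_add_distrib]
    refine Finset.sum_congr rfl fun x _ => ?_
    rw [← Finset.sum_add_distrib]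
    refine Finset.sum_congr rfl fun y _ => ?_
    ring
  rw [hre, him]
  simp only [Finset.sum_sub_distrib, Finset.sum_div,
    Finset.mul_sum, Finset.sum_const, Finset.card_univ, Fintype.card_fin, nsmul_eq_mul]
  rw [h4]
  ring
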